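/- Let X, Y, Z be almost surely positive real-valued random variables on a common probability space such that X is independent of Z, E[X] < ∞ and E[1/Z] < ∞. Then E[log((Z + X)/(Z + Y))] ≤ E[X] · E[1/Z] (the left-hand expectation being well-defined in [−∞, ∞) since the integrand is bounded above by X/Z). -/

import Mathlib

open MeasureTheory ProbabilityTheory

/-- the key mixture-likelihood-ratio inequality used in the proof
of Theorem 4.2 of the paper.  Let `X, Y, Z` be almost surely positive random
variables with `X` independent of `Z`, `E[X] < ∞` and `E[1/Z] < ∞`.  Then
`E[log((Z+X)/(Z+Y))] ≤ E[X]·E[1/Z]`. -/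
theorem stmt4 {Ω : Type*} [MeasurableSpace Ω] (μ : Measure Ω) [IsProbabilityMeasure μ]
    (X Y Z : Ω → ℝ) (hXm : Measurable X) (hYm : Measurable Y) (hZm : Measurable Z)
    (hX : ∀ᵐ ω ∂μ, 0 < X ω) (hY : ∀ᵐ ω ∂μ, 0 < Y ω) (hZ : ∀ᵐ ω ∂μ, 0 < Z ω)
    (hindep : IndepFun X Z μ)
    (hXint : Integrable X μ) (hZint : Integrable (fun ω => (Z ω)⁻¹) μ) :
    ∫ ω, Real.log ((Z ω + X ω) / (Z ω + Y ω)) ∂μ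
      ≤ (∫ ω, X ω ∂μ) * ∫ ω, (Z ω)⁻¹ ∂μ := by
  have hindep' : IndepFun X (fun ω => (Z ω)⁻¹) μ :=
    hindep.comp measurable_id measurable_inv
  have hg_int : Integrable (fun ω => X ω * (Z ω)⁻¹) μ :=
    hindep'.integrable_mul hXint hZint
  have hmul : ∫ ω, X ω * (Z ω)⁻¹ ∂μ = (∫ ω, X ω ∂μ) * ∫ ω, (Z ω)⁻¹ ∂μ :=
    hindep'.integral_fun_mul_eq_mul_integral hXint.aestronglyMeasurable hZint.aestronglyMeasurable
  -- pointwise bound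
  have hpt : ∀ᵐ ω ∂μ, Real.log ((Z ω + X ω) / (Z ω + Y ω)) ≤ X ω * (Z ω)⁻¹ := by
    filter_upwards [hX, hY, hZ] with ω hx hy hz
    have hzy : 0 < Z ω + Y ω := by linarith
    have hzx : 0 < Z ω + X ω := by linarith
    have h1 : Real.log ((Z ω + X ω) / (Z ω + Y ω)) ≤ (Z ω + X ω) / (Z ω + Y ω) - 1 :=
      Real.log_le_sub_one_of_pos (div_pos hzx hzy)
    have h2 : (Z ω + X ω) / (Z ω + Y ω) - 1 = (X ω - Y ω) / (Z ω + Y ω) := by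
      field_simp
      ring
    have h3 : (X ω - Y ω) / (Z ω + Y ω) ≤ X ω / (Z ω + Y ω) := by
      gcongr
      linarith
    have h4 : X ω / (Z ω + Y ω) ≤ X ω / Z ω :=
      div_le_div_of_nonneg_left hx.le hz (by linarith)
    rw [div_eq_mul_inv (X ω) (Z ω)] at h4
    linarith
  by_cases hf : Integrable (fun ω => Real.log ((Z ω + X ω) / (Z ω + Y ω))) μ
  · rw [← hmul]
    exact integral_mono_ae hf hg_int hpt
  · rw [integral_undef hf, ← hmul]
    apply integral_nonneg_of_ae
    filter_upwards [hX, hZ] with ω hx hz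
    positivity
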